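/- Let K ≥ 3, τ ∈ ℝ, and let (μ_k)_{k=1}^K be a concave sequence of reals. Consider the dyadic binary tree on [K] and define the set of good nodes Z = { v : μ_{v(l)} > τ or μ_{v(m)} > τ or μ_{v(r)} > τ }. Then Z is a consecutive tree: there is at most one node v ∈ Z with P(v) ∉ Z, and if z_root denotes this node when it exists (and the root of the whole tree otherwise, in which case the root belongs to Z whenever Z is nonempty), then every node q ∈ Z with q ≠ z_root satisfies P(q) ∈ Z. -/
import Mathlib


/-- A node of the dyadic binary tree on `[K]` is a triple `(L, M, R)` of (1-based) arm
indices. -/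
abbrev TreeNode := ℕ × ℕ × ℕ

/-- Root of the dyadic binary tree on `[K]`. -/
def treeRoot (K : ℕ) : TreeNode := (1, (1 + K) / 2, K)

/-- Left child of a node `(L, M, R)`: `(L, ⌊(L+M)/2⌋, M)`. -/
def leftChild (v : TreeNode) : TreeNode := (v.1, (v.1 + v.2.1) / 2, v.2.1)

/-- Right child of a node `(L, M, R)`: `(M, ⌊(M+R)/2⌋, R)`. -/
def rightChild (v : TreeNode) : TreeNode := (v.2.1, (v.2.1 + v.2.2) / 2, v.2.2)

/-- A node `(L, M, R)` is a leaf when `R = L + 1`. -/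
def IsLeaf (v : TreeNode) : Prop := v.2.2 = v.1 + 1

/-- `Desc u v d`: `v` belongs to the subtree `ST(u)` rooted at `u`, at relative depth `d`
(children are only taken at non-leaf nodes). -/
inductive Desc : TreeNode → TreeNode → ℕ → Prop
  | refl (u : TreeNode) : Desc u u 0
  | left {u v : TreeNode} {d : ℕ} : Desc u v d → ¬IsLeaf v → Desc u (leftChild v) (d + 1)
  | right {u v : TreeNode} {d : ℕ} : Desc u v d → ¬IsLeaf v → Desc u (rightChild v) (d + 1)

/-- A node of the dyadic tree on `[K]`: a descendant of the root. -/
def IsNode (K : ℕ) (v : TreeNode) : Prop := ∃ d, Desc (treeRoot K) v d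

/-- `w` is a child of the (non-leaf) node `v`; equivalently, `v = P(w)`. -/
def ChildOf (v w : TreeNode) : Prop :=
  ¬IsLeaf v ∧ (w = leftChild v ∨ w = rightChild v)

/-- The set of good nodes: nodes of the tree with at least one of its three arms having
mean above the threshold. -/
def goodNodes (K : ℕ) (τ : ℝ) (μ : ℕ → ℝ) : Set TreeNode :=
  {v | IsNode K v ∧ (τ < μ v.1 ∨ τ < μ v.2.1 ∨ τ < μ v.2.2)}

/-- A candidate root of the consecutive tree `Z`: a good node whose parent is not good. -/
def IsZRoot (K : ℕ) (τ : ℝ) (μ : ℕ → ℝ) (v : TreeNode) : Prop :=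
  v ∈ goodNodes K τ μ ∧ ∃ p, IsNode K p ∧ ChildOf p v ∧ p ∉ goodNodes K τ μ

/-- Invariant satisfied by every node of the tree. -/
def TreeInv (K : ℕ) (v : TreeNode) : Prop :=
  1 ≤ v.1 ∧ v.1 < v.2.2 ∧ v.2.2 ≤ K ∧ v.2.1 = (v.1 + v.2.2) / 2

lemma treeInv_root {K : ℕ} (hK : 3 ≤ K) : TreeInv K (treeRoot K) :=
  ⟨le_refl 1, by simp only [treeRoot]; omega, le_refl K, by simp [treeRoot, Nat.add_comm]⟩

lemma treeInv_left {K : ℕ} {v : TreeNode} (h : TreeInv K v) (hl : ¬IsLeaf v) :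
    TreeInv K (leftChild v) := by
  obtain ⟨h1, h2, h3, h4⟩ := h
  simp only [IsLeaf] at hl
  refine ⟨h1, ?_, ?_, rfl⟩ <;> simp only [leftChild] <;> omega

lemma treeInv_right {K : ℕ} {v : TreeNode} (h : TreeInv K v) (hl : ¬IsLeaf v) :
    TreeInv K (rightChild v) := by
  obtain ⟨h1, h2, h3, h4⟩ := h
  simp only [IsLeaf] at hl
  refine ⟨?_, ?_, h3, rfl⟩ <;> simp only [rightChild] <;> omega

lemma desc_inv {K : ℕ} {u v : TreeNode} {d : ℕ} (h : Desc u v d) (hu : TreeInv K u) :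
    TreeInv K v ∧ u.1 ≤ v.1 ∧ v.2.2 ≤ u.2.2 := by
  induction h with
  | refl => exact ⟨hu, le_refl _, le_refl _⟩
  | left h hl ih =>
      obtain ⟨hv, hL, hR⟩ := ih
      obtain ⟨h1, h2, h3, h4⟩ := hv
      exact ⟨treeInv_left ⟨h1, h2, h3, h4⟩ hl, hL, by simp only [leftChild]; omega⟩
  | right h hl ih =>
      obtain ⟨hv, hL, hR⟩ := ih
      obtain ⟨h1, h2, h3, h4⟩ := hv
      exact ⟨treeInv_right ⟨h1, h2, h3, h4⟩ hl, by simp only [rightChild]; omega, hR⟩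

lemma desc_zero {u v : TreeNode} (h : Desc u v 0) : v = u := by
  cases h; rfl

lemma desc_first {a v : TreeNode} {d : ℕ} (h : Desc a v d) :
    (v = a ∧ d = 0) ∨ ∃ c e, ChildOf a c ∧ Desc c v e ∧ d = e + 1 := by
  induction h with
  | refl => exact Or.inl ⟨rfl, rfl⟩
  | @left w e h hl ih =>
      rcases ih with ⟨rfl, rfl⟩ | ⟨c, e', hc, hd, rfl⟩
      · exact Or.inr ⟨_, 0, ⟨hl, Or.inl rfl⟩, Desc.refl _, rfl⟩
      · exact Or.inr ⟨c, e' + 1, hc, Desc.left hd hl, rfl⟩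
  | @right w e h hl ih =>
      rcases ih with ⟨rfl, rfl⟩ | ⟨c, e', hc, hd, rfl⟩
      · exact Or.inr ⟨_, 0, ⟨hl, Or.inr rfl⟩, Desc.refl _, rfl⟩
      · exact Or.inr ⟨c, e' + 1, hc, Desc.right hd hl, rfl⟩

lemma desc_comp {K : ℕ} : ∀ d : ℕ, ∀ {a u u' : TreeNode} {d' : ℕ}, TreeInv K a →
    Desc a u d → Desc a u' d' →
    (∃ x : ℕ, u.1 < x ∧ x < u.2.2 ∧ u'.1 < x ∧ x < u'.2.2) →
    (∃ e, Desc u u' e) ∨ (∃ e, Desc u' u e) := by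
  intro d
  induction d using Nat.strong_induction_on with
  | _ d ih =>
    intro a u u' d' ha hu hu' hx
    rcases desc_first hu with ⟨rfl, rfl⟩ | ⟨c, e, hc, hce, rfl⟩
    · exact Or.inl ⟨d', hu'⟩
    · rcases desc_first hu' with ⟨rfl, rfl⟩ | ⟨c', e', hc', hce', rfl⟩
      · exact Or.inr ⟨e + 1, hu⟩
      · obtain ⟨hnl, hcc⟩ := hc
        obtain ⟨_, hcc'⟩ := hc'
        rcases hcc with rfl | rfl <;> rcases hcc' with rfl | rfl
        · exact ih e (by omega) (treeInv_left ha hnl) hce hce' hx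
        · exfalso
          have hs := (desc_inv hce (treeInv_left ha hnl)).2.2
          have hs' := (desc_inv hce' (treeInv_right ha hnl)).2.1
          obtain ⟨x, h1, h2, h3, h4⟩ := hx
          simp only [leftChild, rightChild] at hs hs'
          omega
        · exfalso
          have hs := (desc_inv hce (treeInv_right ha hnl)).2.1
          have hs' := (desc_inv hce' (treeInv_left ha hnl)).2.2
          obtain ⟨x, h1, h2, h3, h4⟩ := hx
          simp only [leftChild, rightChild] at hs hs'
          omega
        · exact ih e (by omega) (treeInv_right ha hnl) hce hce' hx

lemma desc_kill {K : ℕ} {v w : TreeNode} {e : ℕ} (hinv : TreeInv K v) (hd : Desc v w e)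
    (h1 : w.1 < v.2.1) (h2 : v.2.1 < w.2.2) : w = v := by
  rcases desc_first hd with ⟨rfl, _⟩ | ⟨c, e', ⟨hnl, hch⟩, hce, _⟩
  · rfl
  · exfalso
    rcases hch with rfl | rfl
    · have hs := (desc_inv hce (treeInv_left hinv hnl)).2.2
      simp only [leftChild] at hs; omega
    · have hs := (desc_inv hce (treeInv_right hinv hnl)).2.1
      simp only [rightChild] at hs; omega

section Analytic

variable {K : ℕ} {τ : ℝ} {μ : ℕ → ℝ}

lemma diff_mono (hconc : ∀ i : ℕ, 1 ≤ i → i + 2 ≤ K → μ i + μ (i + 2) ≤ 2 * μ (i + 1))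
    {i : ℕ} (h1 : 1 ≤ i) : ∀ j, i ≤ j → j + 1 ≤ K → μ (j + 1) - μ j ≤ μ (i + 1) - μ i := by
  intro j
  induction j with
  | zero => intro hij _; exact absurd hij (by omega)
  | succ n ihn =>
    intro hij hj
    rcases Nat.lt_or_ge n i with hlt | hge
    · have he : i = n + 1 := by omega
      subst he
      exact le_refl _
    · have hstep := hconc n (by omega) (by omega)
      have he : n + 2 = n + 1 + 1 := rfl
      rw [he] at hstep
      have := ihn hge (by omega)
      linarith

lemma chain_le {b c : ℕ} (hbc : b ≤ c)
    (hd : ∀ j, b ≤ j → j < c → μ (j + 1) ≤ μ j) : μ c ≤ μ b := by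
  induction c, hbc using Nat.le_induction with
  | base => exact le_refl _
  | succ n hn ihn =>
    have h1 := hd n hn (by omega)
    have h2 := ihn (fun j hj hj2 => hd j hj (by omega))
    linarith

lemma chain_ge {a b : ℕ} (hab : a ≤ b)
    (hd : ∀ i, a ≤ i → i < b → μ i ≤ μ (i + 1)) : μ a ≤ μ b := by
  induction b, hab using Nat.le_induction with
  | base => exact le_refl _
  | succ n hn ihn =>
    have h1 := hd n hn (by omega)
    have h2 := ihn (fun i hi hi2 => hd i hi (by omega))
    linarith

lemma exists_drop {a b : ℕ} (hab : a ≤ b) (h : μ b < μ a) :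
    ∃ i, a ≤ i ∧ i < b ∧ μ (i + 1) < μ i := by
  by_contra hno
  push_neg at hno
  exact absurd (chain_ge hab hno) (by linarith)

/-- Quasiconcavity: a concave sequence that is above `τ` at `a` and `c` is above `τ`
in between. -/
lemma qconcave (hconc : ∀ i : ℕ, 1 ≤ i → i + 2 ≤ K → μ i + μ (i + 2) ≤ 2 * μ (i + 1))
    {a b c : ℕ} (h1 : 1 ≤ a) (hab : a < b) (hbc : b < c) (hcK : c ≤ K)
    (ha : τ < μ a) (hc : τ < μ c) : τ < μ b := by
  by_contra hb
  push_neg at hb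
  have hba : μ b < μ a := lt_of_le_of_lt hb ha
  obtain ⟨i, hai, hib, hdrop⟩ := exists_drop (le_of_lt hab) hba
  have hcb : μ c ≤ μ b := by
    refine chain_le (le_of_lt hbc) (fun j hbj hjc => ?_)
    have hdm := diff_mono hconc (le_trans h1 hai) j (by omega) (by omega)
    linarith
  linarith

end Analytic

lemma mem_goodNodes {K : ℕ} {τ : ℝ} {μ : ℕ → ℝ} {v : TreeNode} :
    v ∈ goodNodes K τ μ ↔ IsNode K v ∧ (τ < μ v.1 ∨ τ < μ v.2.1 ∨ τ < μ v.2.2) :=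
  Iff.rfl

lemma zroot_props {K : ℕ} {τ : ℝ} {μ : ℕ → ℝ} (hK : 3 ≤ K) {v : TreeNode}
    (h : IsZRoot K τ μ v) :
    IsNode K v ∧ TreeInv K v ∧ v.1 < v.2.1 ∧ v.2.1 < v.2.2 ∧
      μ v.1 ≤ τ ∧ τ < μ v.2.1 ∧ μ v.2.2 ≤ τ := by
  obtain ⟨hg, p, hp, ⟨hnl, hch⟩, hbad⟩ := h
  obtain ⟨hnode, hgood⟩ := mem_goodNodes.1 hg
  simp only [mem_goodNodes, not_and, not_or, not_lt] at hbad
  obtain ⟨hp1, hp2, hp3⟩ := hbad hp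
  obtain ⟨dv, hdv⟩ := hnode
  have hinvv : TreeInv K v := (desc_inv hdv (treeInv_root hK)).1
  obtain ⟨i1, i2, i3, i4⟩ := hinvv
  have hends : μ v.1 ≤ τ ∧ μ v.2.2 ≤ τ := by
    rcases hch with rfl | rfl
    · exact ⟨hp1, hp2⟩
    · exact ⟨hp2, hp3⟩
  have hmid : τ < μ v.2.1 := by
    rcases hgood with h | h | h
    · exact absurd hends.1 (by linarith)
    · exact h
    · exact absurd hends.2 (by linarith)
  have hLM : v.1 < v.2.1 := by
    rcases Nat.lt_or_ge v.1 v.2.1 with h | h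
    · exact h
    · have he : v.2.1 = v.1 := by omega
      rw [he] at hmid
      exact absurd hends.1 (by linarith)
  have hMR : v.2.1 < v.2.2 := by omega
  exact ⟨⟨dv, hdv⟩, ⟨i1, i2, i3, i4⟩, hLM, hMR, hends.1, hmid, hends.2⟩

lemma mid_between {K : ℕ} {τ : ℝ} {μ : ℕ → ℝ} (hK : 3 ≤ K)
    (hconc : ∀ i : ℕ, 1 ≤ i → i + 2 ≤ K → μ i + μ (i + 2) ≤ 2 * μ (i + 1))
    {v w : TreeNode} (hv : IsZRoot K τ μ v) (hw : IsZRoot K τ μ w) :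
    v.1 < w.2.1 ∧ w.2.1 < v.2.2 := by
  obtain ⟨_, ⟨hv1, hv2, hv3, hv4⟩, hvLM, hvMR, hvL, hvM, hvR⟩ := zroot_props hK hv
  obtain ⟨_, ⟨hw1, hw2, hw3, hw4⟩, hwLM, hwMR, hwL, hwM, hwR⟩ := zroot_props hK hw
  constructor
  · by_contra h
    push_neg at h
    rcases Nat.lt_or_ge w.2.1 v.1 with hlt | hge
    · have := qconcave hconc (by omega) hlt hvLM (by omega) hwM hvM
      linarith
    · have he : w.2.1 = v.1 := by omega
      rw [he] at hwM
      linarith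
  · by_contra h
    push_neg at h
    rcases Nat.lt_or_ge v.2.2 w.2.1 with hlt | hge
    · have := qconcave hconc (by omega) hvMR hlt (by omega) hvM hwM
      linarith
    · have he : w.2.1 = v.2.2 := by omega
      rw [he] at hwM
      linarith

/-- Proposition 5: for a concave sequence of means, the set `Z` of good nodes is a
consecutive tree — there is at most one good node whose parent is not good, every other
good node has its parent in `Z`, and if no such node exists then the root of the whole tree
belongs to `Z` whenever `Z` is nonempty. -/
theorem goodNodes_consecutive_tree
    (K : ℕ) (hK : 3 ≤ K) (τ : ℝ) (μ : ℕ → ℝ)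
    (hconc : ∀ i : ℕ, 1 ≤ i → i + 2 ≤ K → μ i + μ (i + 2) ≤ 2 * μ (i + 1)) :
    (∀ v w, IsZRoot K τ μ v → IsZRoot K τ μ w → v = w) ∧
    (∀ q ∈ goodNodes K τ μ, ¬IsZRoot K τ μ q →
      ∀ p, IsNode K p → ChildOf p q → p ∈ goodNodes K τ μ) ∧
    ((∀ v, ¬IsZRoot K τ μ v) → (∃ v, v ∈ goodNodes K τ μ) →
      treeRoot K ∈ goodNodes K τ μ) := by
  refine ⟨?_, ?_, ?_⟩
  · -- uniqueness of the Z-root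
    intro v w hv hw
    obtain ⟨hnv, hiv, hvLM, hvMR, hvL, hvM, hvR⟩ := zroot_props hK hv
    obtain ⟨hnw, hiw, hwLM, hwMR, hwL, hwM, hwR⟩ := zroot_props hK hw
    have hbvw := mid_between hK hconc hv hw
    have hbwv := mid_between hK hconc hw hv
    obtain ⟨dv, hdv⟩ := hnv
    obtain ⟨dw, hdw⟩ := hnw
    rcases desc_comp dv (treeInv_root hK) hdv hdw
        ⟨w.2.1, hbvw.1, hbvw.2, hwLM, hwMR⟩ with ⟨e, he⟩ | ⟨e, he⟩
    · exact (desc_kill hiv he hbwv.1 hbwv.2).symm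
    · exact desc_kill hiw he hbvw.1 hbvw.2
  · -- every non-root good node has its parents good
    intro q hq hnz p hp hc
    by_contra hbad
    exact hnz ⟨hq, p, hp, hc, hbad⟩
  · -- if there is no Z-root, the root is good whenever Z is nonempty
    intro hno hex
    obtain ⟨v, hv⟩ := hex
    have main : ∀ d : ℕ, ∀ v : TreeNode, Desc (treeRoot K) v d →
        (τ < μ v.1 ∨ τ < μ v.2.1 ∨ τ < μ v.2.2) → treeRoot K ∈ goodNodes K τ μ := by
      intro d
      induction d using Nat.strong_induction_on with
      | _ d ih =>
        intro v hdv hcond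
        rcases desc_first hdv with ⟨rfl, rfl⟩ | ⟨p, e, hcp, hpe, rfl⟩
        · exact mem_goodNodes.2 ⟨⟨0, Desc.refl _⟩, hcond⟩
        · -- v has a parent on the path; find its direct parent via the last step
          cases hdv with
          | left h hl =>
            rename_i u
            by_cases hg : u ∈ goodNodes K τ μ
            · exact ih e (by omega) u h (mem_goodNodes.1 hg).2
            · exact absurd
                ⟨mem_goodNodes.2 ⟨⟨e + 1, Desc.left h hl⟩, hcond⟩,
                  u, ⟨e, h⟩, ⟨hl, Or.inl rfl⟩, hg⟩ (hno _)
          | right h hl =>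
            rename_i u
            by_cases hg : u ∈ goodNodes K τ μ
            · exact ih e (by omega) u h (mem_goodNodes.1 hg).2
            · exact absurd
                ⟨mem_goodNodes.2 ⟨⟨e + 1, Desc.right h hl⟩, hcond⟩,
                  u, ⟨e, h⟩, ⟨hl, Or.inr rfl⟩, hg⟩ (hno _)
    obtain ⟨⟨d, hd⟩, hcond⟩ := mem_goodNodes.1 hv
    exact main d v hd hcond
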